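/- The infinite Fibonacci word is not (eventually) periodic: there is no p ≥ 1 and N such that F(k+p) = F(k) for all k ≥ N. -/

import Mathlib

/-- The two-letter alphabet: `A` and `B`. -/
inductive Letter : Type
  | A : Letter
  | B : Letter
  deriving DecidableEq, Repr

open Letter

/-- The Fibonacci substitution θ : a → ab, b → a. -/
def theta : Letter → List Letter
  | A => [A, B]
  | B => [A]

/-- Extension of the substitution to words, by concatenation. -/
def substWord (w : List Letter) : List Letter := w.flatMap theta

/-- The n-th finite Fibonacci word F_n = θ^n(a). -/
def FibWord (n : ℕ) : List Letter := substWord^[n] [A]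

/-- The infinite Fibonacci word (each F_n is a prefix of all later ones,
and `FibWord (k+1)` has length `fib (k+3) ≥ k+1`, so index `k` is defined). -/
def FibSeq (k : ℕ) : Letter := (FibWord (k + 1)).getD k A

lemma substWord_append (u v : List Letter) :
    substWord (u ++ v) = substWord u ++ substWord v := List.flatMap_append

lemma FibWord_succ (n : ℕ) : FibWord (n + 1) = substWord (FibWord n) :=
  Function.iterate_succ_apply' substWord n [A]

lemma length_substWord (w : List Letter) :
    (substWord w).length = w.length + w.count A := by
  induction w with
  | nil => rfl
  | cons x t ih =>
    have : substWord (x :: t) = theta x ++ substWord t := rfl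
    rw [this, List.length_append, ih, List.count_cons]
    cases x <;> simp [theta] <;> omega

lemma count_substWord (w : List Letter) :
    (substWord w).count A = w.length := by
  induction w with
  | nil => rfl
  | cons x t ih =>
    have : substWord (x :: t) = theta x ++ substWord t := rfl
    rw [this, List.count_append, ih]
    cases x <;> simp [theta] <;> omega

lemma FibWord_stats (n : ℕ) :
    (FibWord n).length = Nat.fib (n + 2) ∧ (FibWord n).count A = Nat.fib (n + 1) := by
  induction n with
  | zero => constructor <;> rfl
  | succ n ih =>
    rw [FibWord_succ]
    constructor
    · rw [length_substWord, ih.1, ih.2]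
      have h1 : Nat.fib (n + 1 + 2) = Nat.fib (n + 1) + Nat.fib (n + 2) := by
        rw [Nat.fib_add_two]
      omega
    · rw [count_substWord, ih.1]

lemma length_FibWord (n : ℕ) : (FibWord n).length = Nat.fib (n + 2) := (FibWord_stats n).1

lemma count_FibWord (n : ℕ) : (FibWord n).count A = Nat.fib (n + 1) := (FibWord_stats n).2

lemma substWord_prefix {u v : List Letter} (h : u <+: v) : substWord u <+: substWord v := by
  obtain ⟨t, rfl⟩ := h
  rw [substWord_append]
  exact ⟨substWord t, rfl⟩

lemma FibWord_prefix_succ (n : ℕ) : FibWord n <+: FibWord (n + 1) := by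
  induction n with
  | zero => exact ⟨[B], rfl⟩
  | succ n ih =>
    have h := substWord_prefix ih
    rwa [← FibWord_succ n, ← FibWord_succ (n+1)] at h

lemma FibWord_prefix {m n : ℕ} (h : m ≤ n) : FibWord m <+: FibWord n := by
  induction n with
  | zero => simpa [Nat.le_zero.mp h]
  | succ n ih =>
    rcases Nat.lt_or_ge m (n+1) with h' | h'
    · exact (ih (Nat.lt_succ_iff.mp h')).trans (FibWord_prefix_succ n)
    · have : m = n + 1 := le_antisymm h h'
      simp [this]

lemma self_le_fib (n : ℕ) : n + 1 ≤ Nat.fib (n + 2) := by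
  induction n with
  | zero => simp
  | succ n ih =>
    have h1 : Nat.fib (n + 1 + 2) = Nat.fib (n + 1) + Nat.fib (n + 2) := by
      rw [Nat.fib_add_two]
    have := Nat.fib_pos.mpr (show 0 < n + 1 by omega)
    omega

lemma getD_prefix {l₁ l₂ : List Letter} (h : l₁ <+: l₂) {k : ℕ} (hk : k < l₁.length) :
    l₂.getD k A = l₁.getD k A := by
  obtain ⟨t, rfl⟩ := h
  exact List.getD_append l₁ t A k hk

lemma FibSeq_eq_getD {n k : ℕ} (hk : k < Nat.fib (n + 2)) :
    (FibWord n).getD k A = FibSeq k := by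
  unfold FibSeq
  rcases le_total (k + 1) n with h | h
  · rw [getD_prefix (FibWord_prefix h)]
    rw [length_FibWord]
    have := self_le_fib (k + 1)
    omega
  · rw [getD_prefix (FibWord_prefix h)]
    rw [length_FibWord]; exact hk

lemma range_map_FibSeq (n : ℕ) :
    (List.range (Nat.fib (n + 2))).map FibSeq = FibWord n := by
  apply List.ext_getElem
  · simp [length_FibWord]
  · intro i h1 h2
    simp only [List.getElem_map, List.getElem_range]
    have hi : i < Nat.fib (n + 2) := by simpa using h1
    rw [← FibSeq_eq_getD hi, List.getD_eq_getElem]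

/-- Number of A's among the first `L` letters of the infinite Fibonacci word. -/
def cnt (L : ℕ) : ℕ := ((List.range L).map FibSeq).count A

lemma cnt_succ (L : ℕ) : cnt (L + 1) = cnt L + (if FibSeq L = A then 1 else 0) := by
  unfold cnt
  rw [List.range_succ, List.map_append, List.count_append]
  congr 1
  cases hF : FibSeq L <;> simp [hF]

lemma cnt_fib (n : ℕ) : cnt (Nat.fib (n + 2)) = Nat.fib (n + 1) := by
  unfold cnt
  rw [range_map_FibSeq, count_FibWord]

lemma cnt_mono_add (L r : ℕ) : cnt L ≤ cnt (L + r) ∧ cnt (L + r) ≤ cnt L + r := by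
  induction r with
  | zero => simp
  | succ r ih =>
    have h := cnt_succ (L + r)
    have hd : (if FibSeq (L + r) = A then 1 else 0) ≤ 1 := by split <;> omega
    have e : cnt (L + (r + 1)) = cnt (L + r + 1) := rfl
    omega

/-- If the "discrepancy" d n = p·fib(n+1) − c·fib(n+2) repeats a pair of consecutive
values, we get p² = c² + cp, which is impossible for p ≥ 1. -/
lemma main_aux (p c k T : ℕ) (hp : 1 ≤ p) (hk : 1 ≤ k) (hT : 1 ≤ T)
    (E1 : (p : ℤ) * Nat.fib (k+1) - c * Nat.fib (k+2)
        = (p : ℤ) * Nat.fib (k+T+1) - c * Nat.fib (k+T+2))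
    (E2 : (p : ℤ) * Nat.fib (k+2) - c * Nat.fib (k+3)
        = (p : ℤ) * Nat.fib (k+T+2) - c * Nat.fib (k+T+3)) : False := by
  -- abbreviations
  set F1 : ℤ := (Nat.fib (k+1) : ℤ) with hF1
  set F2 : ℤ := (Nat.fib (k+2) : ℤ) with hF2
  set F3 : ℤ := (Nat.fib (k+3) : ℤ) with hF3
  set G1 : ℤ := (Nat.fib (k+T+1) : ℤ) with hG1
  set G2 : ℤ := (Nat.fib (k+T+2) : ℤ) with hG2
  set G3 : ℤ := (Nat.fib (k+T+3) : ℤ) with hG3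
  have R1 : F3 = F2 + F1 := by
    rw [hF1, hF2, hF3]
    have : Nat.fib (k+3) = Nat.fib (k+1) + Nat.fib (k+2) := by
      have h := Nat.fib_add_two (n := k+1)
      have e1 : k+1+2 = k+3 := by omega
      have e2 : k+1+1 = k+2 := by omega
      rw [e1, e2] at h; exact h
    exact_mod_cast by rw [this]; push_cast; ring
  have R2 : G3 = G2 + G1 := by
    rw [hG1, hG2, hG3]
    have : Nat.fib (k+T+3) = Nat.fib (k+T+1) + Nat.fib (k+T+2) := by
      have h := Nat.fib_add_two (n := k+T+1)
      have e1 : k+T+1+2 = k+T+3 := by omega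
      have e2 : k+T+1+1 = k+T+2 := by omega
      rw [e1, e2] at h; exact h
    exact_mod_cast by rw [this]; push_cast; ring
  have hpos : 0 < G1 - F1 := by
    have h1 : Nat.fib (k+1) < Nat.fib (k+2) := Nat.fib_lt_fib_succ (by omega)
    have h2 : Nat.fib (k+2) ≤ Nat.fib (k+T+1) := Nat.fib_mono (by omega)
    rw [hF1, hG1]
    have : Nat.fib (k+1) < Nat.fib (k+T+1) := lt_of_lt_of_le h1 h2
    omega
  have h1 : (p : ℤ) * (G1 - F1) = c * (G2 - F2) := by linarith
  have h2 : (p : ℤ) * (G2 - F2) = c * (G3 - F3) := by linarith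
  have h3 : G3 - F3 = (G2 - F2) + (G1 - F1) := by linarith
  have hz : ((p : ℤ) * p - c * c - c * p) * (G1 - F1) = 0 := by
    linear_combination ((p : ℤ) - c) * h1 + (c : ℤ) * h2 + (c : ℤ)^2 * h3
  have hfac : (p : ℤ) * p - c * c - c * p = 0 := by
    rcases mul_eq_zero.mp hz with h | h
    · exact h
    · omega
  have hn : p * p = c * c + c * p := by
    have : (p : ℤ) * p = c * c + c * p := by linarith
    exact_mod_cast this
  -- now the number-theoretic contradiction
  rcases Nat.eq_zero_or_pos c with hc0 | hc
  · rw [hc0] at hn; simp at hn; omega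
  · set g := Nat.gcd p c with hg
    have hgpos : 0 < g := Nat.gcd_pos_of_pos_left c hp
    set p' := p / g with hp'
    set c' := c / g with hc'
    have hpe : p = g * p' := (Nat.mul_div_cancel' (Nat.gcd_dvd_left p c)).symm
    have hce : c = g * c' := (Nat.mul_div_cancel' (Nat.gcd_dvd_right p c)).symm
    have cop : Nat.Coprime p' c' := Nat.coprime_div_gcd_div_gcd hgpos
    have key : p' * p' = c' * c' + c' * p' := by
      have h2 : (g * g) * (p' * p') = (g * g) * (c' * c' + c' * p') := by
        calc (g * g) * (p' * p') = (g * p') * (g * p') := by ring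
        _ = (g * c') * (g * c') + (g * c') * (g * p') := by rw [← hpe, ← hce]; exact hn
        _ = (g * g) * (c' * c' + c' * p') := by ring
      exact Nat.eq_of_mul_eq_mul_left (by positivity) h2
    have hdvd : p' ∣ c' * (c' + p') := ⟨p', by rw [Nat.mul_add]; omega⟩
    have hdvd2 : p' ∣ c' + p' := (Nat.Coprime.dvd_of_dvd_mul_left cop hdvd)
    have hdvd3 : p' ∣ c' := (Nat.dvd_add_right (dvd_refl p')).mp (by rwa [Nat.add_comm] at hdvd2)
    have hp1 : p' = 1 := Nat.eq_one_of_dvd_coprimes cop (dvd_refl p') hdvd3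
    have hc1 : 1 ≤ c' := Nat.div_pos (Nat.le_of_dvd hc (Nat.gcd_dvd_right p c)) hgpos
    rw [hp1] at key
    have m1 : 1 * 1 ≤ c' * c' := Nat.mul_le_mul hc1 hc1
    simp only [one_mul, mul_one] at key m1
    linarith [key, m1, hc1]

theorem fib_word_not_eventually_periodic :
    ¬ ∃ p : ℕ, 1 ≤ p ∧ ∃ N : ℕ, ∀ k : ℕ, N ≤ k → FibSeq (k + p) = FibSeq k := by
  rintro ⟨p, hp, N, hper⟩
  -- the number of A's in each period window is constant, call it c
  obtain ⟨c, hc⟩ : ∃ c, cnt (N + p) = cnt N + c := by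
    have := (cnt_mono_add N p).1
    exact ⟨cnt (N + p) - cnt N, by omega⟩
  have hc_le : c ≤ p := by
    have := (cnt_mono_add N p).2
    omega
  -- cnt grows by exactly c over each later window of length p
  have hwin : ∀ L, N ≤ L → cnt (L + p) = cnt L + c := by
    intro L hL
    induction L, hL using Nat.le_induction with
    | base => exact hc
    | succ L hL ih =>
      have e : L + 1 + p = L + p + 1 := by omega
      rw [e, cnt_succ, cnt_succ, hper L hL, ih]
      omega
  have hmul : ∀ m, cnt (N + m * p) = cnt N + m * c := by
    intro m
    induction m with
    | zero => simp
    | succ m ih =>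
      have e : N + (m + 1) * p = N + m * p + p := by ring
      rw [e, hwin (N + m * p) (by omega), ih]
      ring
  -- linear bounds on cnt
  have hB : ∀ L, N ≤ L →
      p * cnt L ≤ c * L + (c * N + c * p + p * cnt N + p * p) ∧
      c * L ≤ p * cnt L + (c * N + c * p + p * cnt N + p * p) := by
    intro L hL
    set m := (L - N) / p with hm
    set r := (L - N) % p with hr
    have hdm : m * p + r = L - N := by
      rw [hm, hr, Nat.mul_comm]
      exact Nat.div_add_mod (L - N) p
    have hrp : r < p := Nat.mod_lt _ (by omega)
    have hLe : L = N + m * p + r := by omega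
    have f0 : cnt (N + m * p) = cnt N + m * c := hmul m
    have f1 : cnt (N + m * p) ≤ cnt L := by
      rw [hLe]; exact (cnt_mono_add (N + m * p) r).1
    have f2 : cnt L ≤ cnt (N + m * p) + r := by
      rw [hLe]; exact (cnt_mono_add (N + m * p) r).2
    constructor
    · nlinarith [f0, f1, f2, hrp, hc_le, hLe]
    · nlinarith [f0, f1, f2, hrp, hc_le, hLe]
  -- the discrepancy sequence
  set B : ℤ := ((c * N + c * p + p * cnt N + p * p : ℕ) : ℤ) with hBdef
  have hd : ∀ n, N ≤ n → |(p : ℤ) * Nat.fib (n + 1) - c * Nat.fib (n + 2)| ≤ B := by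
    intro n hn
    have hLN : N ≤ Nat.fib (n + 2) := le_trans (by omega) (self_le_fib n)
    obtain ⟨u1, u2⟩ := hB (Nat.fib (n + 2)) hLN
    rw [cnt_fib] at u1 u2
    rw [abs_le]
    constructor
    · have : (c * Nat.fib (n+2) : ℤ) ≤ (p * Nat.fib (n+1) : ℤ) + B := by
        rw [hBdef]; exact_mod_cast u2
      linarith
    · have : (p * Nat.fib (n+1) : ℤ) ≤ (c * Nat.fib (n+2) : ℤ) + B := by
        rw [hBdef]; exact_mod_cast u1
      linarith
  -- pigeonhole on pairs of consecutive discrepancies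
  set d : ℕ → ℤ := fun j => (p : ℤ) * Nat.fib (N + 1 + j + 1) - c * Nat.fib (N + 1 + j + 2)
    with hddef
  have hdmem : ∀ j, d j ∈ Finset.Icc (-B) B := by
    intro j
    rw [Finset.mem_Icc, ← abs_le]
    exact hd (N + 1 + j) (by omega)
  set S : Finset (ℤ × ℤ) := Finset.Icc (-B) B ×ˢ Finset.Icc (-B) B with hS
  obtain ⟨a, ha, b, hb, hab, hfab⟩ :
      ∃ a ∈ Finset.range (S.card + 1), ∃ b ∈ Finset.range (S.card + 1),
        a ≠ b ∧ (d a, d (a + 1)) = (d b, d (b + 1)) := by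
    apply Finset.exists_ne_map_eq_of_card_lt_of_maps_to (t := S)
    · rw [Finset.card_range]; omega
    · intro j _
      rw [hS, Finset.mem_coe, Finset.mem_product]
      exact ⟨hdmem j, hdmem (j + 1)⟩
  have key : ∀ a b : ℕ, a < b → (d a, d (a + 1)) = (d b, d (b + 1)) → False := by
    intro a b hlt heq
    have h1 : d a = d b := congrArg Prod.fst heq
    have h2 : d (a + 1) = d (b + 1) := congrArg Prod.snd heq
    set k := N + 1 + a with hk
    set T := b - a with hT
    have e1 : N + 1 + b + 1 = k + T + 1 := by omega
    have e2 : N + 1 + b + 2 = k + T + 2 := by omega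
    have e3 : N + 1 + (a + 1) + 1 = k + 2 := by omega
    have e4 : N + 1 + (a + 1) + 2 = k + 3 := by omega
    have e5 : N + 1 + (b + 1) + 1 = k + T + 2 := by omega
    have e6 : N + 1 + (b + 1) + 2 = k + T + 3 := by omega
    rw [hddef] at h1 h2
    simp only [e1, e2, e3, e4, e5, e6] at h1 h2
    have e7 : N + 1 + a + 1 = k + 1 := by omega
    have e8 : N + 1 + a + 2 = k + 2 := by omega
    rw [e7, e8] at h1
    exact main_aux p c k T hp (by omega) (by omega) h1 h2
  rcases Ne.lt_or_gt hab with h | h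
  · exact key a b h hfab
  · exact key b a h hfab.symm
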